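/- Next-generation computation of the TB reproduction number: for the TB submodel, let F = [[0, βe·Λ/(N·d), 0], [0, 0, 0], [0, 0, 0]] be the new-infections matrix and V = [[d+k1, 0, 0], [−k1, d+dT+r, 0], [0, −r, r1+d+dT]] the transition matrix for the infected compartments (T_L, T_I, T_T) at the disease-free equilibrium. Then V is invertible and the spectral radius of F·V⁻¹ (the largest modulus of its complex eigenvalues) equals R0T = βe·Λ·k1/(N·d·(d+r+dT)·(d+k1)). -/

import Mathlib

open Matrix Polynomial
set_option maxHeartbeats 1000000

lemma charpoly_rank_one' {R : Type*} [CommRing R] (a b : R) :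
    (!![a, b, 0; 0, 0, 0; 0, 0, 0] : Matrix (Fin 3) (Fin 3) R).charpoly
      = X^2 * (X - C a) := by
  rw [Matrix.charpoly, Matrix.det_fin_three]
  simp [Matrix.charmatrix_apply, Matrix.one_apply, Matrix.vecHead, Matrix.vecTail]
  ring

theorem TB_next_generation (Lam d dT k1 r r1 be Nv : ℝ)
    (hLam : 0 < Lam) (hd : 0 < d) (hdT : 0 < dT) (hk1 : 0 < k1)
    (hr : 0 < r) (hr1 : 0 < r1) (hbe : 0 < be) (hNv : 0 < Nv)
    (F V : Matrix (Fin 3) (Fin 3) ℝ)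
    (hF : F = !![0, be * Lam / (Nv * d), 0; 0, 0, 0; 0, 0, 0])
    (hV : V = !![d + k1, 0, 0; -k1, d + dT + r, 0; 0, -r, r1 + d + dT]) :
    IsUnit V.det ∧
    (∀ μ : ℂ, (Matrix.charpoly ((F * V⁻¹).map Complex.ofReal)).IsRoot μ →
      ‖μ‖ ≤ be * Lam * k1 / (Nv * d * (d + r + dT) * (d + k1))) ∧
    (∃ μ : ℂ, (Matrix.charpoly ((F * V⁻¹).map Complex.ofReal)).IsRoot μ ∧
      ‖μ‖ = be * Lam * k1 / (Nv * d * (d + r + dT) * (d + k1))) := by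
  have h1 : (0:ℝ) < d + k1 := by linarith
  have h2 : (0:ℝ) < d + dT + r := by linarith
  have h3 : (0:ℝ) < r1 + d + dT := by linarith
  set a : ℝ := be * Lam * k1 / (Nv * d * (d + r + dT) * (d + k1)) with ha
  have hden : Nv * d * (d + r + dT) * (d + k1) ≠ 0 := by positivity
  have ha_pos : 0 < a := by positivity
  have e1 : d + k1 ≠ 0 := ne_of_gt h1
  have e2 : d + dT + r ≠ 0 := ne_of_gt h2
  have e3 : r1 + d + dT ≠ 0 := ne_of_gt h3
  have e4 : Nv * d ≠ 0 := by positivity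
  have hVinv : V⁻¹ = !![1/(d+k1), 0, 0;
      k1/((d+k1)*(d+dT+r)), 1/(d+dT+r), 0;
      k1*r/((d+k1)*(d+dT+r)*(r1+d+dT)), r/((d+dT+r)*(r1+d+dT)), 1/(r1+d+dT)] := by
    apply Matrix.inv_eq_right_inv
    subst hV
    ext i j
    fin_cases i <;> fin_cases j <;>
      simp [Matrix.mul_apply, Fin.sum_univ_three, Matrix.one_apply, Matrix.vecHead,
        Matrix.vecTail]
    all_goals field_simp
    all_goals ring
  have hM : F * V⁻¹ = !![a, be * Lam / (Nv * d * (d + dT + r)), 0; 0,0,0; 0,0,0] := by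
    rw [hF, hVinv]
    ext i j
    fin_cases i <;> fin_cases j <;>
      simp [Matrix.mul_apply, Fin.sum_univ_three, ha, Matrix.vecHead, Matrix.vecTail]
    all_goals field_simp
    all_goals ring
  have hmap : (F * V⁻¹).map Complex.ofReal
      = !![(a:ℂ), ((be * Lam / (Nv * d * (d + dT + r)) : ℝ) : ℂ), 0; 0,0,0; 0,0,0] := by
    rw [hM]
    ext i j
    fin_cases i <;> fin_cases j <;> simp [Matrix.vecHead, Matrix.vecTail]
  have hcp : (Matrix.charpoly ((F * V⁻¹).map Complex.ofReal))
      = X^2 * (X - C (a:ℂ)) := by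
    rw [hmap, charpoly_rank_one']
  refine ⟨?_, ?_, ?_⟩
  · rw [hV, Matrix.det_fin_three]
    simp only [isUnit_iff_ne_zero]
    intro h
    simp [Matrix.vecHead, Matrix.vecTail] at h
    rcases h with (h | h) | h <;> linarith
  · intro μ hμ
    rw [hcp] at hμ
    have hz : μ^2 * (μ - (a:ℂ)) = 0 := by simpa [Polynomial.IsRoot] using hμ
    rcases mul_eq_zero.1 hz with h | h
    · have h0 : μ = 0 := by
        have := pow_eq_zero_iff (n := 2) (by norm_num) |>.1 h
        exact this
      simp [h0]; positivity
    · have h0 : μ = (a:ℂ) := sub_eq_zero.1 h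
      rw [h0]
      simp [Complex.norm_real, abs_of_pos ha_pos]
  · refine ⟨(a:ℂ), ?_, ?_⟩
    · rw [hcp]; simp [Polynomial.IsRoot]
    · simp [Complex.norm_real, abs_of_pos ha_pos]
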